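/- Let m ≥ 3, let Y ⊆ ℝ and N ⊆ ℝ^m be nonempty sets, and let f : Y × N × [0,1]^m → ℝ^m be a structural function such that (1) for every (y,n) ∈ Y × N the map u ↦ f(y,n,u) is injective and differentiable, with its Jacobian (derivative) at every point u ∈ [0,1]^m being a positive definite linear map; (2) g : ℝ^m → ℝ^m is injective and differentiable; (3) the pushforward of the uniform probability measure on [0,1]^m under the map q_{y,n} := u ↦ g(f(y,n,u)) is the same measure for all (y,n) ∈ Y × N (i.e., the latent variable g(x) is independent of (y,n)); and (4) there exist a function c : Y × N → ℝ with c(y,n) > 0 and a fixed orthogonal m×m matrix A such that for every (y,n) ∈ Y × N and every u ∈ [0,1]^m, the derivative of q_{y,n} at u equals the linear map v ↦ c(y,n)·(A v). Then there exists a single injective map q̃ : [0,1]^m → ℝ^m such that g(f(y,n,u)) = q̃(u) for all (y,n) ∈ Y × N and all u ∈ [0,1]^m. -/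

import Mathlib

open MeasureTheory

private lemma aux_c_b {m : ℕ} (hm : 0 < m)
    (s : Set (EuclideanSpace ℝ (Fin m))) (hcomp : IsCompact s) (hs1 : volume s = 1)
    (L : EuclideanSpace ℝ (Fin m) →L[ℝ] EuclideanSpace ℝ (Fin m))
    (hLinj : Function.Injective L)
    (c₁ c₂ : ℝ) (hc₁ : 0 < c₁) (hc₂ : 0 < c₂) (b₁ b₂ : EuclideanSpace ℝ (Fin m))
    (heq : Measure.map (fun x => c₁ • L x + b₁) (volume.restrict s)
         = Measure.map (fun x => c₂ • L x + b₂) (volume.restrict s)) :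
    c₁ = c₂ ∧ b₁ = b₂ := by
  haveI : Nonempty (Fin m) := ⟨⟨0, hm⟩⟩
  set μ := volume.restrict s with hμdef
  haveI : IsProbabilityMeasure μ := ⟨by rw [hμdef, Measure.restrict_apply_univ]; exact hs1⟩
  have hint_id : Integrable (fun x : EuclideanSpace ℝ (Fin m) => x) μ :=
    continuous_id.continuousOn.integrableOn_compact hcomp
  set mb := ∫ x, x ∂μ with hmb
  have hTc : ∀ (c : ℝ) (b : EuclideanSpace ℝ (Fin m)),
      Continuous (fun x : EuclideanSpace ℝ (Fin m) => c • L x + b) :=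
    fun c b => ((L.continuous.const_smul c).add continuous_const)
  have hmean : ∀ (c : ℝ) (b : EuclideanSpace ℝ (Fin m)),
      (∫ x, x ∂(Measure.map (fun x => c • L x + b) μ)) = c • L mb + b := by
    intro c b
    rw [integral_map (hTc c b).aemeasurable measurable_id'.aestronglyMeasurable]
    have h1 : Integrable (fun x => c • L x) μ := (L.integrable_comp hint_id).smul c
    rw [integral_add h1 (integrable_const b), integral_const, probReal_univ,
      one_smul, integral_smul, L.integral_comp_comm hint_id]
  have hM : c₁ • L mb + b₁ = c₂ • L mb + b₂ := by
    rw [← hmean c₁ b₁, ← hmean c₂ b₂, heq]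
  set K := ∫ x, ‖L (x - mb)‖^2 ∂μ with hK
  have hvar : ∀ (c : ℝ) (b : EuclideanSpace ℝ (Fin m)),
      (∫ x, ‖x - (c • L mb + b)‖^2 ∂(Measure.map (fun x => c • L x + b) μ)) = c^2 * K := by
    intro c b
    rw [integral_map (hTc c b).aemeasurable
      ((by fun_prop : Continuous (fun x : EuclideanSpace ℝ (Fin m) => ‖x - (c • L mb + b)‖^2)).aestronglyMeasurable)]
    have hpt : ∀ x : EuclideanSpace ℝ (Fin m),
        ‖(c • L x + b) - (c • L mb + b)‖^2 = c^2 * ‖L (x - mb)‖^2 := by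
      intro x
      have hx : (c • L x + b) - (c • L mb + b) = c • L (x - mb) := by
        rw [map_sub, smul_sub]; abel
      rw [hx, norm_smul, mul_pow, Real.norm_eq_abs, sq_abs]
    simp_rw [hpt]
    rw [integral_const_mul]
  have hVeq : c₁^2 * K = c₂^2 * K := by
    have h1 := hvar c₁ b₁
    have h2 := hvar c₂ b₂
    rw [heq, hM] at h1
    exact h1.symm.trans h2
  have hKint : Integrable (fun x => ‖L (x - mb)‖^2) μ :=
    (((L.continuous.comp (continuous_id.sub continuous_const)).norm.pow 2)).continuousOn.integrableOn_compact hcomp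
  have hKpos : 0 < K := by
    rcases (integral_nonneg (fun x => by positivity) : 0 ≤ K).lt_or_eq with h | h
    · exact h
    exfalso
    have h0 : (fun x : EuclideanSpace ℝ (Fin m) => ‖L (x - mb)‖^2) =ᵐ[μ] 0 :=
      (integral_eq_zero_iff_of_nonneg (fun x => by positivity) hKint).mp h.symm
    have hae : ∀ᵐ x ∂μ, x = mb := by
      filter_upwards [h0] with x hx
      have hx0 : ‖L (x - mb)‖ = 0 := by
        have h4 : ‖L (x - mb)‖^2 = 0 := hx
        nlinarith [norm_nonneg (L (x - mb))]
      have h2 : L (x - mb) = L 0 := by rw [map_zero]; exact norm_eq_zero.mp hx0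
      exact sub_eq_zero.mp (hLinj h2)
    have h1 : μ {x | ¬ x = mb} = 0 := ae_iff.mp hae
    have h3 : μ Set.univ ≤ μ {mb} + μ {x | ¬ x = mb} := by
      rw [show (Set.univ : Set (EuclideanSpace ℝ (Fin m))) = {mb} ∪ {x | ¬ x = mb} from by
        ext x; simp [em]]
      exact measure_union_le _ _
    rw [measure_univ, measure_singleton, h1] at h3
    simp at h3
  have hcc : c₁ = c₂ := by
    have hsq := mul_right_cancel₀ (ne_of_gt hKpos) hVeq
    have h2 : (c₁ - c₂) * (c₁ + c₂) = 0 := by ring_nf; linarith [hsq]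
    rcases mul_eq_zero.mp h2 with h | h
    · exact sub_eq_zero.mp h
    · linarith
  rw [hcc] at hM
  exact ⟨hcc, add_left_cancel hM⟩


/-- **Theorem 1.** In the structural causal model `x = f(y, n, u)` with exogenous noise `u`
uniform on the cube `[0,1]^m` (`m ≥ 3`), suppose:
(1) for each `(y, n) ∈ Y × N` the map `u ↦ f y n u` is injective on the cube and
differentiable, with positive definite Jacobian `f' y n u` at every `u` in the cube;
(2) the forward map `g` is injective and differentiable;
(3) the pushforward of the uniform measure on the cube under `u ↦ g (f y n u)` does not
depend on `(y, n)` (independence of the latent from the parents);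
(4) the derivative of `u ↦ g (f y n u)` at each point of the cube equals
`c y n • A` with a positive scalar `c y n` and a fixed orthogonal matrix `A`.
Then there is a single injective map `q̃` on the cube with `g (f y n u) = q̃ u` for all
`y ∈ Y`, `n ∈ N`, `u` in the cube. -/
theorem latent_identifiability
    (m : ℕ) (hm : 3 ≤ m)
    (Y : Set ℝ) (N : Set (EuclideanSpace ℝ (Fin m)))
    (hY : Y.Nonempty) (hN : N.Nonempty)
    (f : ℝ → EuclideanSpace ℝ (Fin m) → EuclideanSpace ℝ (Fin m) →
      EuclideanSpace ℝ (Fin m))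
    (g : EuclideanSpace ℝ (Fin m) → EuclideanSpace ℝ (Fin m))
    (cube : Set (EuclideanSpace ℝ (Fin m)))
    (hcube : cube = {u | ∀ i : Fin m, u i ∈ Set.Icc (0 : ℝ) 1})
    -- condition (1): `f y n` is injective and differentiable with positive definite Jacobian
    (f' : ℝ → EuclideanSpace ℝ (Fin m) → EuclideanSpace ℝ (Fin m) →
      (EuclideanSpace ℝ (Fin m) →L[ℝ] EuclideanSpace ℝ (Fin m)))
    (hf_inj : ∀ y ∈ Y, ∀ n ∈ N, Set.InjOn (f y n) cube)
    (hf_deriv : ∀ y ∈ Y, ∀ n ∈ N, ∀ u ∈ cube, HasFDerivAt (f y n) (f' y n u) u)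
    (hf_pos : ∀ y ∈ Y, ∀ n ∈ N, ∀ u ∈ cube,
      ∀ v : EuclideanSpace ℝ (Fin m), v ≠ 0 → 0 < (inner ℝ (f' y n u v) v : ℝ))
    -- condition (2): `g` is injective and differentiable
    (hg_inj : Function.Injective g)
    (hg_diff : Differentiable ℝ g)
    -- condition (3): the latent `g x` is independent of the parents `(y, n)`:
    -- the pushforward of the uniform probability measure on the cube under
    -- `u ↦ g (f y n u)` is the same for all `(y, n) ∈ Y × N`
    (hindep : ∀ y₁ ∈ Y, ∀ n₁ ∈ N, ∀ y₂ ∈ Y, ∀ n₂ ∈ N,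
      Measure.map (fun u => g (f y₁ n₁ u)) (volume.restrict cube) =
        Measure.map (fun u => g (f y₂ n₂ u)) (volume.restrict cube))
    -- condition (4): the derivative of `q_{y,n} := u ↦ g (f y n u)` equals `c y n • A`
    -- with `c y n > 0` and `A` a fixed orthogonal matrix
    (c : ℝ → EuclideanSpace ℝ (Fin m) → ℝ)
    (hc : ∀ y ∈ Y, ∀ n ∈ N, 0 < c y n)
    (A : Matrix (Fin m) (Fin m) ℝ) (hA : A.transpose * A = 1)
    (hq_deriv : ∀ y ∈ Y, ∀ n ∈ N, ∀ u ∈ cube,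
      HasFDerivAt (fun u => g (f y n u))
        (c y n • (LinearMap.toContinuousLinearMap (Matrix.toEuclideanLin A))) u) :
    ∃ qt : EuclideanSpace ℝ (Fin m) → EuclideanSpace ℝ (Fin m),
      Set.InjOn qt cube ∧ ∀ y ∈ Y, ∀ n ∈ N, ∀ u ∈ cube, g (f y n u) = qt u := by
  obtain ⟨y₀, hy₀⟩ := hY
  obtain ⟨n₀, hn₀⟩ := hN
  set L := LinearMap.toContinuousLinearMap (Matrix.toEuclideanLin A) with hL
  -- basic facts about the cube
  have hcomp : IsCompact cube := by
    rw [hcube]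
    have hpi : IsCompact (Set.univ.pi fun _ : Fin m => Set.Icc (0:ℝ) 1) :=
      isCompact_univ_pi fun _ => isCompact_Icc
    have h2 := hpi.image (PiLp.continuousLinearEquiv 2 ℝ (fun _ : Fin m => ℝ)).symm.continuous
    convert h2 using 1
    ext u
    constructor
    · intro hu; exact ⟨(WithLp.equiv 2 _) u, fun i _ => hu i, rfl⟩
    · rintro ⟨v, hv, rfl⟩; intro i; exact hv i (Set.mem_univ i)
  have hmeas : MeasurableSet cube := hcomp.isClosed.measurableSet
  have hconv : Convex ℝ cube := by
    rw [hcube]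
    have hpi : Convex ℝ (Set.univ.pi fun _ : Fin m => Set.Icc (0:ℝ) 1) :=
      convex_pi fun i _ => convex_Icc 0 1
    intro x hx y hy a b ha hb hab i
    exact hpi (x := (WithLp.equiv 2 _) x) (fun i _ => hx i) (y := (WithLp.equiv 2 _) y)
      (fun i _ => hy i) ha hb hab i (Set.mem_univ i)
  have hvol : volume cube = 1 := by
    have h : cube
        = (MeasurableEquiv.toLp 2 (Fin m → ℝ)).symm ⁻¹' (Set.univ.pi fun _ => Set.Icc (0:ℝ) 1) := by
      rw [hcube]; ext u
      simp only [Set.mem_preimage, Set.mem_pi, Set.mem_univ, forall_true_left, Set.mem_setOf_eq]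
      rfl
    rw [h, (EuclideanSpace.volume_preserving_symm_measurableEquiv_toLp (Fin m)).measure_preimage
      ((MeasurableSet.univ_pi fun _ => measurableSet_Icc).nullMeasurableSet)]
    rw [volume_pi_pi]
    simp [Real.volume_Icc]
  have h0cube : (0 : EuclideanSpace ℝ (Fin m)) ∈ cube := by
    rw [hcube]; intro i
    constructor <;> simp
  have hLinj : Function.Injective L := by
    intro v w h
    have h0 : Matrix.toEuclideanLin A (v - w) = 0 := by
      simp only [map_sub]
      simpa [hL, sub_eq_zero] using h
    have h1 : A.mulVec ((WithLp.equiv 2 (Fin m → ℝ)) (v - w)) = 0 := by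
      have := congrArg (WithLp.equiv 2 (Fin m → ℝ)) h0
      simpa [Matrix.toEuclideanLin_apply] using this
    have h2 : (WithLp.equiv 2 (Fin m → ℝ)) (v - w) = 0 := by
      have := congrArg (fun z => A.transpose.mulVec z) h1
      simpa [Matrix.mulVec_mulVec, hA] using this
    have h3 : v - w = 0 := by
      simpa using congrArg (WithLp.equiv 2 (Fin m → ℝ)).symm h2
    exact sub_eq_zero.mp h3
  -- affine representation of `q_{y,n}` on the cube
  have haff : ∀ y ∈ Y, ∀ n ∈ N, ∀ u ∈ cube,
      g (f y n u) = c y n • L u + g (f y n 0) := by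
    intro y hy n hn u hu
    have hder : ∀ v ∈ cube,
        HasFDerivWithinAt (fun w => g (f y n w) - (c y n • L) w)
          (0 : EuclideanSpace ℝ (Fin m) →L[ℝ] EuclideanSpace ℝ (Fin m)) cube v := by
      intro v hv
      have h1 := (hq_deriv y hy n hn v hv).sub ((c y n • L).hasFDerivAt (x := v))
      rw [sub_self] at h1
      exact h1.hasFDerivWithinAt
    have hb := hconv.norm_image_sub_le_of_norm_hasFDerivWithin_le hder
      (fun v hv => norm_zero.le) h0cube hu
    have h2 : (g (f y n u) - (c y n • L) u) - (g (f y n 0) - (c y n • L) 0) = 0 := by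
      rw [← norm_le_zero_iff]
      simpa using hb
    have h3 : g (f y n u) - (c y n • L) u = g (f y n 0) := by
      have h4 := sub_eq_zero.mp h2
      simpa using h4
    have := sub_eq_iff_eq_add.mp h3
    rw [this]; abel
  -- pushforwards agree with those of the affine maps
  have hmapeq : ∀ y ∈ Y, ∀ n ∈ N,
      Measure.map (fun u => g (f y n u)) (volume.restrict cube)
        = Measure.map (fun u => c y n • L u + g (f y n 0)) (volume.restrict cube) := by
    intro y hy n hn
    apply Measure.map_congr
    filter_upwards [ae_restrict_mem hmeas] with u hu
    exact haff y hy n hn u hu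
  -- identify constants
  have key : ∀ y ∈ Y, ∀ n ∈ N, ∀ u ∈ cube, g (f y n u) = g (f y₀ n₀ u) := by
    intro y hy n hn u hu
    have heq : Measure.map (fun u => c y n • L u + g (f y n 0)) (volume.restrict cube)
        = Measure.map (fun u => c y₀ n₀ • L u + g (f y₀ n₀ 0)) (volume.restrict cube) := by
      rw [← hmapeq y hy n hn, ← hmapeq y₀ hy₀ n₀ hn₀]
      exact hindep y hy n hn y₀ hy₀ n₀ hn₀
    obtain ⟨hceq, hbeq⟩ := aux_c_b (by omega) cube hcomp hvol L hLinj
      (c y n) (c y₀ n₀) (hc y hy n hn) (hc y₀ hy₀ n₀ hn₀)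
      (g (f y n 0)) (g (f y₀ n₀ 0)) heq
    rw [haff y hy n hn u hu, haff y₀ hy₀ n₀ hn₀ u hu, hceq, hbeq]
  exact ⟨fun u => g (f y₀ n₀ u), fun a ha b hb h => hf_inj y₀ hy₀ n₀ hn₀ ha hb (hg_inj h),
    key⟩
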